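/- For every x ∈ ℝ³ and every direction v ∈ ℝ³, (DG(x)[v])·G(x)⁻¹ − G(x)⁻¹·(DG(x)[v]) = −(2i/(ℓ² + r²))·((x×v)·τ), where x×v is the cross product in ℝ³. -/

import Mathlib

open Matrix Complex

noncomputable section

attribute [local instance] Matrix.normedAddCommGroup Matrix.normedSpace

/-- The Pauli matrices τ₁, τ₂, τ₃. -/
def pauli : Fin 3 → Matrix (Fin 2) (Fin 2) ℂ :=
  ![!![0, 1; 1, 0], !![0, -I; I, 0], !![1, 0; 0, -1]]

/-- The Pauli vector x·τ = x₁τ₁ + x₂τ₂ + x₃τ₃ for x ∈ ℝ³. -/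
def pauliVec (x : EuclideanSpace ℝ (Fin 3)) : Matrix (Fin 2) (Fin 2) ℂ :=
  (x 0 : ℂ) • pauli 0 + (x 1 : ℂ) • pauli 1 + (x 2 : ℂ) • pauli 2

/-- G(x) = (ℓ·I + i x·τ)/√(ℓ² + r²), the inverse gnomonic projection. -/
def Gmap (ℓ : ℝ) (x : EuclideanSpace ℝ (Fin 3)) : Matrix (Fin 2) (Fin 2) ℂ :=
  (((Real.sqrt (ℓ ^ 2 + ‖x‖ ^ 2))⁻¹ : ℝ) : ℂ) •
    ((ℓ : ℂ) • (1 : Matrix (Fin 2) (Fin 2) ℂ) + I • pauliVec x)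

/-- H(x) = ((ℓ² − r²)·I + 2iℓ x·τ)/(ℓ² + r²), the inverse stereographic projection. -/
def Hmap (ℓ : ℝ) (x : EuclideanSpace ℝ (Fin 3)) : Matrix (Fin 2) (Fin 2) ℂ :=
  ((((ℓ ^ 2 + ‖x‖ ^ 2))⁻¹ : ℝ) : ℂ) •
    (((ℓ ^ 2 - ‖x‖ ^ 2 : ℝ) : ℂ) • (1 : Matrix (Fin 2) (Fin 2) ℂ)
      + ((2 * ℓ : ℝ) : ℂ) • I • pauliVec x)

/-- The Pauli vector (x×v)·τ of the cross product x×v in ℝ³. -/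
def crossPauliVec (x v : EuclideanSpace ℝ (Fin 3)) : Matrix (Fin 2) (Fin 2) ℂ :=
  ((x 1 * v 2 - x 2 * v 1 : ℝ) : ℂ) • pauli 0 +
    ((x 2 * v 0 - x 0 * v 2 : ℝ) : ℂ) • pauli 1 +
      ((x 0 * v 1 - x 1 * v 0 : ℝ) : ℂ) • pauli 2

-- ===== auxiliary lemmas =====

lemma coe_smul' (r : ℝ) (M : Matrix (Fin 2) (Fin 2) ℂ) : ((r:ℝ):ℂ) • M = r • M := by
  rw [← algebraMap_smul ℂ r M]; rfl

/-- The Pauli vector as a continuous linear map. -/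
def pL : EuclideanSpace ℝ (Fin 3) →L[ℝ] Matrix (Fin 2) (Fin 2) ℂ :=
  (EuclideanSpace.proj (0:Fin 3)).smulRight (pauli 0) +
  (EuclideanSpace.proj (1:Fin 3)).smulRight (pauli 1) +
  (EuclideanSpace.proj (2:Fin 3)).smulRight (pauli 2)

lemma pL_apply (x : EuclideanSpace ℝ (Fin 3)) : pL x = pauliVec x := by
  simp [pL, pauliVec, coe_smul']

lemma hasFDerivAt_G (ℓ : ℝ) (hℓ : 0 < ℓ) (x : EuclideanSpace ℝ (Fin 3)) :
    HasFDerivAt (Gmap ℓ)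
      ((((Real.sqrt (ℓ ^ 2 + ‖x‖ ^ 2))⁻¹ : ℝ)) • (I • pL) +
        (fderiv ℝ (fun y : EuclideanSpace ℝ (Fin 3) => (Real.sqrt (ℓ ^ 2 + ‖y‖ ^ 2))⁻¹) x).smulRight
          ((ℓ : ℂ) • (1 : Matrix (Fin 2) (Fin 2) ℂ) + I • pauliVec x)) x := by
  have hpos : ∀ y : EuclideanSpace ℝ (Fin 3), 0 < ℓ ^ 2 + ‖y‖ ^ 2 := fun y => by positivity
  have hd2 : DifferentiableAt ℝ (fun y : EuclideanSpace ℝ (Fin 3) => ℓ ^ 2 + ‖y‖ ^ 2) x := by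
    apply (differentiableAt_const _).add
    exact ((differentiable_id.inner ℝ differentiable_id).differentiableAt (x := x)).congr_of_eventuallyEq
      (by filter_upwards with y
          rw [← real_inner_self_eq_norm_sq]; simp [PiLp.inner_apply, RCLike.inner_apply])
  have hf : DifferentiableAt ℝ (fun y : EuclideanSpace ℝ (Fin 3) => (Real.sqrt (ℓ ^ 2 + ‖y‖ ^ 2))⁻¹) x :=
    (hd2.sqrt (hpos x).ne').inv (Real.sqrt_ne_zero'.2 (hpos x))
  have hg : HasFDerivAt (fun y : EuclideanSpace ℝ (Fin 3) =>
      (ℓ : ℂ) • (1 : Matrix (Fin 2) (Fin 2) ℂ) + I • pauliVec y) (I • pL) x := by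
    have h1 : HasFDerivAt (fun y : EuclideanSpace ℝ (Fin 3) =>
        (ℓ : ℂ) • (1 : Matrix (Fin 2) (Fin 2) ℂ) + (I • pL) y) (I • pL) x := by
      exact ((hasFDerivAt_const ((ℓ : ℂ) • (1 : Matrix (Fin 2) (Fin 2) ℂ)) x).add (I • pL).hasFDerivAt).congr_fderiv (zero_add _)
    exact h1.congr_of_eventuallyEq (by filter_upwards with y; simp [pL_apply])
  have h2 := hf.hasFDerivAt.smul hg
  apply h2.congr_of_eventuallyEq
  filter_upwards with y
  simp only [Gmap, coe_smul']
  rfl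

lemma norm_sq_eq' (x : EuclideanSpace ℝ (Fin 3)) : ‖x‖^2 = x 0^2 + x 1^2 + x 2^2 := by
  rw [EuclideanSpace.norm_eq, Real.sq_sqrt (by positivity)]
  simp [Fin.sum_univ_three, sq_abs]

lemma Ginv_eq (ℓ : ℝ) (hℓ : 0 < ℓ) (x : EuclideanSpace ℝ (Fin 3)) :
    (Gmap ℓ x)⁻¹ = (((Real.sqrt (ℓ ^ 2 + ‖x‖ ^ 2))⁻¹ : ℝ) : ℂ) •
      ((ℓ : ℂ) • (1 : Matrix (Fin 2) (Fin 2) ℂ) - I • pauliVec x) := by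
  apply Matrix.inv_eq_right_inv
  have hpos : (0:ℝ) < ℓ ^ 2 + ‖x‖ ^ 2 := by positivity
  have ht0 : Real.sqrt (ℓ ^ 2 + ‖x‖ ^ 2) ≠ 0 := by positivity
  have key : ((Real.sqrt (ℓ ^ 2 + ‖x‖ ^ 2) : ℝ) : ℂ) * ((Real.sqrt (ℓ ^ 2 + ‖x‖ ^ 2) : ℝ) : ℂ)
      = (ℓ:ℂ)^2 + (x 0:ℂ)^2 + (x 1:ℂ)^2 + (x 2:ℂ)^2 := by
    have h3 : Real.sqrt (ℓ ^ 2 + ‖x‖ ^ 2) * Real.sqrt (ℓ ^ 2 + ‖x‖ ^ 2)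
        = ℓ^2 + x 0^2 + x 1^2 + x 2^2 := by
      rw [← sq, Real.sq_sqrt hpos.le, norm_sq_eq']; ring
    exact_mod_cast congrArg (Complex.ofReal ·) h3
  have ht0c : ((Real.sqrt (ℓ ^ 2 + ‖x‖ ^ 2) : ℝ) : ℂ) ≠ 0 := by exact_mod_cast ht0
  ext i j
  fin_cases i <;> fin_cases j <;>
    · simp [Gmap, pauliVec, pauli, Matrix.mul_apply, Fin.sum_univ_succ, Matrix.one_apply]
      field_simp
      try ring_nf
      try simp only [Complex.I_sq, show (Complex.I)^4 = 1 by simp [pow_succ, Complex.I_mul_I]]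
      all_goals first
      | linear_combination -key
      | linear_combination key
      | linear_combination (-(((Real.sqrt (ℓ ^ 2 + ‖x‖ ^ 2) : ℝ) : ℂ))^2) * key
      | linear_combination ((((Real.sqrt (ℓ ^ 2 + ‖x‖ ^ 2) : ℝ) : ℂ))^2) * key
      | ring
      | skip

set_option maxHeartbeats 2000000 in
lemma main_alg (x v : EuclideanSpace ℝ (Fin 3)) (t c s ℓc : ℂ)
    (ht : t * t = s) (ht0 : t ≠ 0) :
    (t⁻¹ • (I • pauliVec v) + c • (ℓc • (1 : Matrix (Fin 2) (Fin 2) ℂ) + I • pauliVec x)) *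
        (t⁻¹ • (ℓc • (1 : Matrix (Fin 2) (Fin 2) ℂ) - I • pauliVec x)) -
      (t⁻¹ • (ℓc • (1 : Matrix (Fin 2) (Fin 2) ℂ) - I • pauliVec x)) *
        (t⁻¹ • (I • pauliVec v) + c • (ℓc • (1 : Matrix (Fin 2) (Fin 2) ℂ) + I • pauliVec x)) =
      (-(2 * I) / s) • crossPauliVec x v := by
  ext i j
  fin_cases i <;> fin_cases j <;>
    · rw [← ht]
      simp [pauliVec, crossPauliVec, pauli, Matrix.mul_apply, Fin.sum_univ_succ, Matrix.one_apply,
        div_eq_mul_inv]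
      field_simp
      try ring_nf
      try simp only [Complex.I_sq, show (I:ℂ)^3 = -I by simp [pow_succ, Complex.I_mul_I],
        show (I:ℂ)^4 = 1 by simp [pow_succ, Complex.I_mul_I],
        show (I:ℂ)^5 = I by simp [pow_succ, Complex.I_mul_I]]
      all_goals ring

/-- dG G⁻¹ − G⁻¹ dG = −(2i/(ℓ² + r²))·((x×v)·τ). -/
theorem dG_Ginv_sub_Ginv_dG (ℓ : ℝ) (hℓ : 0 < ℓ) (x v : EuclideanSpace ℝ (Fin 3)) :
    fderiv ℝ (Gmap ℓ) x v * (Gmap ℓ x)⁻¹ - (Gmap ℓ x)⁻¹ * fderiv ℝ (Gmap ℓ) x v =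
      (-(2 * I) / ((ℓ ^ 2 + ‖x‖ ^ 2 : ℝ) : ℂ)) • crossPauliVec x v := by
  have hpos : (0:ℝ) < ℓ ^ 2 + ‖x‖ ^ 2 := by positivity
  have ht0 : Real.sqrt (ℓ ^ 2 + ‖x‖ ^ 2) ≠ 0 := by positivity
  have ht0c : ((Real.sqrt (ℓ ^ 2 + ‖x‖ ^ 2) : ℝ) : ℂ) ≠ 0 := by exact_mod_cast ht0
  have key : ((Real.sqrt (ℓ ^ 2 + ‖x‖ ^ 2) : ℝ) : ℂ) * ((Real.sqrt (ℓ ^ 2 + ‖x‖ ^ 2) : ℝ) : ℂ)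
      = ((ℓ ^ 2 + ‖x‖ ^ 2 : ℝ) : ℂ) := by
    have h3 : Real.sqrt (ℓ ^ 2 + ‖x‖ ^ 2) * Real.sqrt (ℓ ^ 2 + ‖x‖ ^ 2) = ℓ ^ 2 + ‖x‖ ^ 2 := by
      rw [← sq, Real.sq_sqrt hpos.le]
    exact_mod_cast congrArg (Complex.ofReal ·) h3
  have hder : fderiv ℝ (Gmap ℓ) x v
      = (((Real.sqrt (ℓ ^ 2 + ‖x‖ ^ 2) : ℝ) : ℂ))⁻¹ • (I • pauliVec v) +
        ((fderiv ℝ (fun y : EuclideanSpace ℝ (Fin 3) => (Real.sqrt (ℓ ^ 2 + ‖y‖ ^ 2))⁻¹) x v : ℝ) : ℂ) •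
          ((ℓ : ℂ) • (1 : Matrix (Fin 2) (Fin 2) ℂ) + I • pauliVec x) := by
    rw [(hasFDerivAt_G ℓ hℓ x).fderiv]
    simp only [ContinuousLinearMap.add_apply, ContinuousLinearMap.smul_apply,
      ContinuousLinearMap.smulRight_apply, pL_apply]
    simp only [← coe_smul', Complex.ofReal_inv]
  rw [hder, Ginv_eq ℓ hℓ x, Complex.ofReal_inv]
  exact main_alg x v _ _ _ _ key ht0c
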